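/- arXiv:2003.10499 — 2 statements merged into one kernel-verified Lean document; each statement's English description precedes it below -/
import Mathlib

section
/- Let p be a prime and n ≥ 1. The determinant of the square matrix of size p^{n−1}(p−1), with rows and columns indexed by the integers a, b in the interval [p^{n−1}, p^n − 1] and with (a,b)-entry |Desc(a) ∩ Desc(b)|, equals p^{p^{n−1} − 1}. -/
/-- For `p^m ≤ a < p^(m+1)` with base-`p` expansion `a = Σ_{i=0}^m a_i p^i` (so `a_m ≠ 0`),
the set of descendants of `a` is
`Desc(a) = { a_m p^m + Σ_{i=0}^{m-1} ε_i a_i p^i : ε_i ∈ {1, -1} } ⊆ ℤ`. -/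
def Desc (p m a : ℕ) : Set ℤ :=
  {d | ∃ ε : ℕ → ℤ, (∀ i, ε i = 1 ∨ ε i = -1) ∧
    d = ((a / p ^ m : ℕ) : ℤ) * (p : ℤ) ^ m +
      ∑ i ∈ Finset.range m, ε i * (((a / p ^ i % p : ℕ) : ℤ) * (p : ℤ) ^ i)}

/-- `X_{ab}` is the number of common descendants of `a` and `b`. -/
noncomputable def Xcard (p m a b : ℕ) : ℕ := (Desc p m a ∩ Desc p m b).ncard

/-- `Y_{ab}` is the number of descendants `d` of `a` such that `d - 1` is a descendant of `b`. -/
noncomputable def Ycard (p m a b : ℕ) : ℕ := {d ∈ Desc p m a | d - 1 ∈ Desc p m b}.ncard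

namespace VerDetAux

open Finset
open scoped Classical

noncomputable def ind (P : Prop) : ℤ := if P then 1 else 0

noncomputable def chi (q β x : ℕ) : ℤ := ind (x % (2 * q) = 2 * q - β) - ind (x % (2 * q) = β)

lemma ind_congr {P Q : Prop} (h : P ↔ Q) : ind P = ind Q := by
  simp only [ind]; split_ifs with h1 h2 <;> tauto

lemma digit_sum (p a : ℕ) : ∀ m, ∑ i ∈ range m, a / p ^ i % p * p ^ i = a % p ^ m := by
  intro m
  induction m with
  | zero => simp [Nat.mod_one]
  | succ m ih =>
    rw [Finset.sum_range_succ, ih]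
    have h1 : a % (p ^ m * p) % p ^ m = a % p ^ m := Nat.mod_mod_of_dvd a ⟨p, rfl⟩
    have h2 : a % (p ^ m * p) / p ^ m = a / p ^ m % p := Nat.mod_mul_right_div_self a _ _
    have h3 := Nat.div_add_mod (a % (p ^ m * p)) (p ^ m)
    rw [h1, h2] at h3
    have h4 : p ^ m * (a / p ^ m % p) = a / p ^ m % p * p ^ m := Nat.mul_comm _ _
    rw [pow_succ]
    omega

lemma digit_sum_int (p a m : ℕ) :
    ∑ i ∈ range m, (((a / p ^ i % p : ℕ) : ℤ) * (p : ℤ) ^ i) = ((a % p ^ m : ℕ) : ℤ) := by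
  rw [← digit_sum p a m]
  push_cast
  rfl

lemma cast_div_add_mod (p a m : ℕ) :
    ((a / p ^ m : ℕ) : ℤ) * (p : ℤ) ^ m + ((a % p ^ m : ℕ) : ℤ) = (a : ℤ) := by
  have hq : (p : ℤ) ^ m = ((p ^ m : ℕ) : ℤ) := by push_cast; rfl
  rw [hq]
  exact_mod_cast Nat.div_add_mod' a (p ^ m)

lemma cast_pow_eq (p m : ℕ) : ((p ^ m : ℕ) : ℤ) = (p : ℤ) ^ m := by push_cast; rfl

lemma self_mem_desc (p m a : ℕ) : (a : ℤ) ∈ Desc p m a := by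
  refine ⟨fun _ => 1, fun _ => Or.inl rfl, ?_⟩
  have h1 : ∑ i ∈ range m, (1 : ℤ) * (((a / p ^ i % p : ℕ) : ℤ) * (p : ℤ) ^ i)
      = ((a % p ^ m : ℕ) : ℤ) := by
    rw [← digit_sum_int p a m]
    exact Finset.sum_congr rfl fun i _ => one_mul _
  rw [h1, cast_div_add_mod]

lemma desc_bound {p m a : ℕ} {d : ℤ} (hd : d ∈ Desc p m a) :
    ((a / p ^ m : ℕ) : ℤ) * (p : ℤ) ^ m - ((a % p ^ m : ℕ) : ℤ) ≤ d ∧ d ≤ (a : ℤ) := by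
  obtain ⟨ε, hε, rfl⟩ := hd
  have habs : |∑ i ∈ range m, ε i * (((a / p ^ i % p : ℕ) : ℤ) * (p : ℤ) ^ i)| ≤
      ((a % p ^ m : ℕ) : ℤ) := by
    calc |∑ i ∈ range m, ε i * (((a / p ^ i % p : ℕ) : ℤ) * (p : ℤ) ^ i)|
        ≤ ∑ i ∈ range m, |ε i * (((a / p ^ i % p : ℕ) : ℤ) * (p : ℤ) ^ i)| :=
          Finset.abs_sum_le_sum_abs _ _
      _ = ∑ i ∈ range m, (((a / p ^ i % p : ℕ) : ℤ) * (p : ℤ) ^ i) := by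
          refine Finset.sum_congr rfl fun i _ => ?_
          rw [abs_mul]
          have h1 : |ε i| = 1 := by rcases hε i with h | h <;> simp [h]
          rw [h1, one_mul, abs_of_nonneg (by positivity)]
      _ = ((a % p ^ m : ℕ) : ℤ) := digit_sum_int p a m
  have h2' := cast_div_add_mod p a m
  rw [abs_le] at habs
  constructor <;> linarith [habs.1, habs.2]

lemma desc_flip {p m a : ℕ} {d : ℤ} (hd : d ∈ Desc p m a) :
    2 * ((a / p ^ m : ℕ) : ℤ) * (p : ℤ) ^ m - d ∈ Desc p m a := by
  obtain ⟨ε, hε, rfl⟩ := hd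
  refine ⟨fun i => -ε i, fun i => by rcases hε i with h | h <;> simp [h], ?_⟩
  have h1 : ∑ i ∈ range m, (fun i => -ε i) i * (((a / p ^ i % p : ℕ) : ℤ) * (p : ℤ) ^ i)
      = -∑ i ∈ range m, ε i * (((a / p ^ i % p : ℕ) : ℤ) * (p : ℤ) ^ i) := by
    rw [← Finset.sum_neg_distrib]
    exact Finset.sum_congr rfl fun i _ => by ring
  rw [h1]
  ring

lemma desc_one_le {p m a : ℕ} {d : ℤ} (hp : 0 < p) (ha1 : p ^ m ≤ a) (hd : d ∈ Desc p m a) :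
    1 ≤ d := by
  obtain ⟨h1, _⟩ := desc_bound hd
  have hA : 1 ≤ a / p ^ m := (Nat.one_le_div_iff (pow_pos hp m)).mpr ha1
  have hA' : (1 : ℤ) ≤ ((a / p ^ m : ℕ) : ℤ) := by exact_mod_cast hA
  have hm : a % p ^ m < p ^ m := Nat.mod_lt _ (pow_pos hp m)
  have hm' : ((a % p ^ m : ℕ) : ℤ) < ((p ^ m : ℕ) : ℤ) := by exact_mod_cast hm
  rw [cast_pow_eq] at hm'
  nlinarith [hA', hm', h1]

lemma xcard_eq {p m a b : ℕ} (hp : 0 < p) (ha1 : p ^ m ≤ a) (ha2 : a < p ^ m * p) :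
    ((Xcard p m a b : ℕ) : ℤ) = ∑ k ∈ range (p ^ m * p - 1),
      ind (((1 + k : ℕ) : ℤ) ∈ Desc p m a) * ind (((1 + k : ℕ) : ℤ) ∈ Desc p m b) := by
  set S := Desc p m a ∩ Desc p m b with hS
  have hbd : ∀ d ∈ S, 1 ≤ d ∧ d ≤ (a : ℤ) :=
    fun d hd => ⟨desc_one_le hp ha1 hd.1, (desc_bound hd.1).2⟩
  set g : ℕ → ℤ := fun k => (1 + k : ℕ) with hg
  have hginj : Function.Injective g := by
    intro x y h
    simp only [hg] at h
    have : 1 + x = 1 + y := by exact_mod_cast h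
    omega
  set F : Finset ℤ := ((range (p ^ m * p - 1)).image g).filter (· ∈ S) with hF
  have hFS : ↑F = S := by
    ext x
    simp only [hF, coe_filter, Set.mem_setOf_eq, mem_image, mem_range, Finset.mem_coe]
    constructor
    · rintro ⟨_, hx⟩; exact hx
    · intro hx
      refine ⟨⟨(x - 1).toNat, ?_, ?_⟩, hx⟩
      · have h1 := (hbd x hx).1
        have h2 := (hbd x hx).2
        have ha : (a : ℤ) < ((p ^ m * p : ℕ) : ℤ) := by exact_mod_cast ha2
        omega
      · have h1 := (hbd x hx).1
        simp only [hg]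
        push_cast
        omega
  have h1 : Xcard p m a b = F.card := by
    rw [Xcard, ← hS, ← hFS, Set.ncard_coe_finset]
  rw [h1, hF, Finset.filter_image, Finset.card_image_of_injective _ hginj,
    Finset.card_filter]
  push_cast
  refine Finset.sum_congr rfl fun k _ => ?_
  by_cases h1 : (1 + (k : ℤ)) ∈ Desc p m a <;> by_cases h2 : (1 + (k : ℤ)) ∈ Desc p m b <;>
    simp [ind, hS, Set.mem_inter_iff, h1, h2, hg, Nat.cast_add, Nat.cast_one]

lemma xcard_split {p m a b N : ℕ} (hp : 0 < p) (hN : p ^ m + N = p ^ m * p)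
    (ha1 : p ^ m ≤ a) (ha2 : a < p ^ m * p) :
    ((Xcard p m a b : ℕ) : ℤ)
      = (∑ k ∈ range (p ^ m - 1),
          ind (((1 + k : ℕ) : ℤ) ∈ Desc p m a) * ind (((1 + k : ℕ) : ℤ) ∈ Desc p m b))
        + ∑ d ∈ range N,
          ind (((p ^ m + d : ℕ) : ℤ) ∈ Desc p m a)
            * ind (((p ^ m + d : ℕ) : ℤ) ∈ Desc p m b) := by
  rw [xcard_eq hp ha1 ha2]
  have hq0 : 0 < p ^ m := pow_pos hp m
  have hsplit : p ^ m * p - 1 = (p ^ m - 1) + N := by omega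
  rw [hsplit, Finset.sum_range_add]
  congr 1
  refine Finset.sum_congr rfl fun d _ => ?_
  have h : 1 + (p ^ m - 1 + d) = p ^ m + d := by omega
  rw [h]

lemma chi_pair {q β x y : ℕ} (hq : 0 < q) (hβ1 : 1 ≤ β) (hβ2 : β < q) (h : 2 * q ∣ x + y) :
    chi q β x + chi q β y = 0 := by
  obtain ⟨c, hc⟩ := h
  have hr : x % (2 * q) < 2 * q := Nat.mod_lt _ (by omega)
  have hr' : y % (2 * q) < 2 * q := Nat.mod_lt _ (by omega)
  have h2 : (x % (2 * q) + y % (2 * q)) % (2 * q) = 0 := by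
    rw [← Nat.add_mod, hc, Nat.mul_mod_right]
  have h3 : x % (2 * q) + y % (2 * q) = 0 ∨ x % (2 * q) + y % (2 * q) = 2 * q := by
    rcases Nat.lt_or_ge (x % (2 * q) + y % (2 * q)) (2 * q) with h4 | h4
    · left; rwa [Nat.mod_eq_of_lt h4] at h2
    · right
      rw [Nat.mod_eq_sub_mod h4, Nat.mod_eq_of_lt (by omega)] at h2
      omega
  have e1 : (y % (2 * q) = 2 * q - β) ↔ (x % (2 * q) = β) := by constructor <;> intro <;> omega
  have e2 : (y % (2 * q) = β) ↔ (x % (2 * q) = 2 * q - β) := by constructor <;> intro <;> omega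
  unfold chi
  rw [ind_congr e1, ind_congr e2]
  ring

lemma chi_mul_of_dvd {q β x : ℕ} (hq : 0 < q) (hβ1 : 1 ≤ β) (hβ2 : β < q) (h : q ∣ x) :
    chi q β x = 0 := by
  obtain ⟨t, ht⟩ := h
  rcases Nat.even_or_odd t with ⟨u, hu⟩ | ⟨u, hu⟩
  · have hx : x = 2 * q * u := by rw [ht, hu]; ring
    have hmod : x % (2 * q) = 0 := by rw [hx, Nat.mul_mod_right]
    unfold chi
    rw [hmod]
    have i1 : ind (0 = 2 * q - β) = 0 := by simp only [ind]; rw [if_neg (by omega)]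
    have i2 : ind (0 = β) = 0 := by simp only [ind]; rw [if_neg (by omega)]
    rw [i1, i2]; ring
  · have hx : x = 2 * q * u + q := by rw [ht, hu]; ring
    have hmod : x % (2 * q) = q := by rw [hx, Nat.mul_add_mod, Nat.mod_eq_of_lt (by omega)]
    unfold chi
    rw [hmod]
    have i1 : ind (q = 2 * q - β) = 0 := by simp only [ind]; rw [if_neg (by omega)]
    have i2 : ind (q = β) = 0 := by simp only [ind]; rw [if_neg (by omega)]
    rw [i1, i2]; ring

lemma desc_nat_facts {p m a : ℕ} (hp : 0 < p) (ha1 : p ^ m ≤ a) {x : ℕ}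
    (hx : (x : ℤ) ∈ Desc p m a) :
    1 ≤ x ∧ x ≤ a ∧ x + 1 ≤ 2 * (a / p ^ m * p ^ m) := by
  obtain ⟨_, h2⟩ := desc_bound hx
  have h1 := desc_one_le hp ha1 hx
  have hx1 : 1 ≤ x := by exact_mod_cast h1
  have hx2 : x ≤ a := by exact_mod_cast h2
  have hdm : a / p ^ m * p ^ m + a % p ^ m = a := Nat.div_add_mod' a (p ^ m)
  have hlt : a % p ^ m < p ^ m := Nat.mod_lt _ (pow_pos hp m)
  have hA1 : 1 ≤ a / p ^ m := (Nat.one_le_div_iff (pow_pos hp m)).mpr ha1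
  have hqt : p ^ m ≤ a / p ^ m * p ^ m := Nat.le_mul_of_pos_left _ hA1
  omega

lemma sum_ind_chi {p m a β : ℕ} (hp : 0 < p) (ha1 : p ^ m ≤ a) (ha2 : a < p ^ m * p)
    (hβ1 : 1 ≤ β) (hβ2 : β < p ^ m) :
    ∑ x ∈ (range (p ^ m * p)).filter (fun x => ((x : ℕ) : ℤ) ∈ Desc p m a),
      chi (p ^ m) β x = 0 := by
  have hq : 0 < p ^ m := pow_pos hp m
  refine Finset.sum_involution (fun x _ => 2 * (a / p ^ m * p ^ m) - x) ?_ ?_ ?_ ?_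
  · intro x hx
    obtain ⟨hx1, hx2, hx3⟩ := desc_nat_facts hp ha1 (mem_filter.mp hx).2
    refine chi_pair hq hβ1 hβ2 ⟨a / p ^ m, ?_⟩
    have h5 : x + (2 * (a / p ^ m * p ^ m) - x) = 2 * (a / p ^ m * p ^ m) := by omega
    rw [h5]; ring
  · intro x hx hfx
    obtain ⟨hx1, hx2, hx3⟩ := desc_nat_facts hp ha1 (mem_filter.mp hx).2
    intro heq
    replace heq : 2 * (a / p ^ m * p ^ m) - x = x := heq
    apply hfx
    have hxx : x = a / p ^ m * p ^ m := by omega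
    exact chi_mul_of_dvd hq hβ1 hβ2 ⟨a / p ^ m, by rw [hxx]; ring⟩
  · intro x hx
    show 2 * (a / p ^ m * p ^ m) - x ∈
      (range (p ^ m * p)).filter (fun x => ((x : ℕ) : ℤ) ∈ Desc p m a)
    obtain ⟨hmem, hxd⟩ := mem_filter.mp hx
    obtain ⟨hx1, hx2, hx3⟩ := desc_nat_facts hp ha1 hxd
    have hcast : ((2 * (a / p ^ m * p ^ m) - x : ℕ) : ℤ)
        = 2 * ((a / p ^ m : ℕ) : ℤ) * (p : ℤ) ^ m - (x : ℤ) := by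
      have hcp := cast_pow_eq p m
      push_cast [Nat.cast_sub (by omega : x ≤ 2 * (a / p ^ m * p ^ m))]
      rw [← hcp]
      push_cast
      ring
    have hflip := desc_flip hxd
    rw [← hcast] at hflip
    rw [mem_filter]
    refine ⟨mem_range.mpr ?_, hflip⟩
    obtain ⟨_, hy2, _⟩ := desc_nat_facts hp ha1 hflip
    omega
  · intro x hx
    show 2 * (a / p ^ m * p ^ m) - (2 * (a / p ^ m * p ^ m) - x) = x
    obtain ⟨hx1, hx2, hx3⟩ := desc_nat_facts hp ha1 (mem_filter.mp hx).2
    omega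

lemma sum_chi_high {p m a β N : ℕ} (hp : 0 < p) (hN : p ^ m + N = p ^ m * p)
    (ha1 : p ^ m ≤ a) (ha2 : a < p ^ m * p) (hβ1 : 1 ≤ β) (hβ2 : β < p ^ m) :
    ∑ d ∈ range N, ind (((p ^ m + d : ℕ) : ℤ) ∈ Desc p m a) * chi (p ^ m) β (p ^ m + d)
      = ind (((β : ℕ) : ℤ) ∈ Desc p m a) := by
  have hq : 0 < p ^ m := pow_pos hp m
  have h0 : ∑ x ∈ range (p ^ m * p), ind ((x : ℤ) ∈ Desc p m a) * chi (p ^ m) β x = 0 := by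
    rw [← sum_ind_chi hp ha1 ha2 hβ1 hβ2, Finset.sum_filter]
    refine Finset.sum_congr rfl fun x _ => ?_
    by_cases h : (x : ℤ) ∈ Desc p m a <;> simp [ind, h]
  rw [← hN, Finset.sum_range_add] at h0
  have hlow : ∑ x ∈ range (p ^ m), ind ((x : ℤ) ∈ Desc p m a) * chi (p ^ m) β x
      = -ind (((β : ℕ) : ℤ) ∈ Desc p m a) := by
    have hterm : ∀ x ∈ range (p ^ m), ind ((x : ℤ) ∈ Desc p m a) * chi (p ^ m) β x
        = -(if x = β then ind ((x : ℤ) ∈ Desc p m a) else 0) := by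
      intro x hx
      have hxq : x < p ^ m := mem_range.mp hx
      have hmod : x % (2 * p ^ m) = x := Nat.mod_eq_of_lt (by omega)
      have hc : chi (p ^ m) β x = -ind (x = β) := by
        unfold chi
        rw [hmod]
        have i1 : ind (x = 2 * p ^ m - β) = 0 := by
          simp only [ind]; rw [if_neg (by omega)]
        rw [i1]; ring
      rw [hc]
      by_cases h : x = β <;> simp [ind, h] <;> ring
    rw [Finset.sum_congr rfl hterm, Finset.sum_neg_distrib]
    rw [Finset.sum_ite_eq' (range (p ^ m)) β (fun x => ind ((x : ℤ) ∈ Desc p m a))]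
    rw [if_pos (mem_range.mpr hβ2)]
  rw [hlow] at h0
  linarith [h0]

lemma chi_sq {q β : ℕ} (x : ℕ) (hβ2 : β < q) :
    chi q β x * chi q β x
      = ind (x % (2 * q) = 2 * q - β) + ind (x % (2 * q) = β) := by
  unfold chi ind
  split_ifs <;> first | omega | ring

lemma chi_mul_ne {q β β' : ℕ} (x : ℕ) (hβ1 : 1 ≤ β) (hβ2 : β < q)
    (hβ1' : 1 ≤ β') (hβ2' : β' < q) (hne : β ≠ β') :
    chi q β x * chi q β' x = 0 := by
  unfold chi ind
  split_ifs <;> first | omega | ring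

lemma window_sum {q β : ℕ} (c : ℕ) (hq : 0 < q) (hβ1 : 1 ≤ β) (hβ2 : β < q) (hc : q ∣ c) :
    ∑ s ∈ range q, (ind ((c + s) % (2 * q) = 2 * q - β) + ind ((c + s) % (2 * q) = β)) = 1 := by
  obtain ⟨j, hj⟩ := hc
  rcases Nat.even_or_odd j with ⟨t, ht⟩ | ⟨t, ht⟩
  · have hterm : ∀ s ∈ range q,
        (ind ((c + s) % (2 * q) = 2 * q - β) + ind ((c + s) % (2 * q) = β))
          = if s = β then 1 else 0 := by
      intro s hs
      have hsq : s < q := mem_range.mp hs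
      have hc2 : c + s = 2 * q * t + s := by rw [hj, ht]; ring
      have hmod : (c + s) % (2 * q) = s := by
        rw [hc2, Nat.mul_add_mod, Nat.mod_eq_of_lt (by omega)]
      rw [hmod]
      unfold ind
      split_ifs <;> first | omega | ring
    rw [Finset.sum_congr rfl hterm, Finset.sum_ite_eq' (range q) β (fun _ => (1 : ℤ)),
      if_pos (mem_range.mpr hβ2)]
  · have hterm : ∀ s ∈ range q,
        (ind ((c + s) % (2 * q) = 2 * q - β) + ind ((c + s) % (2 * q) = β))
          = if s = q - β then 1 else 0 := by
      intro s hs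
      have hsq : s < q := mem_range.mp hs
      have hc2 : c + s = 2 * q * t + (q + s) := by rw [hj, ht]; ring
      have hmod : (c + s) % (2 * q) = q + s := by
        rw [hc2, Nat.mul_add_mod, Nat.mod_eq_of_lt (by omega)]
      rw [hmod]
      unfold ind
      split_ifs <;> first | omega | ring
    rw [Finset.sum_congr rfl hterm, Finset.sum_ite_eq' (range q) (q - β) (fun _ => (1 : ℤ)),
      if_pos (mem_range.mpr (by omega))]

lemma count_sum {q β : ℕ} (hq : 0 < q) (hβ1 : 1 ≤ β) (hβ2 : β < q) :
    ∀ k, ∑ d ∈ range (q * k),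
      (ind ((q + d) % (2 * q) = 2 * q - β) + ind ((q + d) % (2 * q) = β)) = k := by
  intro k
  induction k with
  | zero => simp
  | succ k ih =>
    have hsplit : q * (k + 1) = q * k + q := by ring
    rw [hsplit, Finset.sum_range_add, ih]
    have hterm : ∀ s ∈ range q,
        (ind ((q + (q * k + s)) % (2 * q) = 2 * q - β)
          + ind ((q + (q * k + s)) % (2 * q) = β))
        = (ind (((q + q * k) + s) % (2 * q) = 2 * q - β)
          + ind (((q + q * k) + s) % (2 * q) = β)) := by
      intro s _
      have h : q + (q * k + s) = (q + q * k) + s := by ring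
      rw [h]
    rw [Finset.sum_congr rfl hterm, window_sum (q + q * k) hq hβ1 hβ2 ⟨1 + k, by ring⟩]
    push_cast
    ring

end VerDetAux

open VerDetAux Finset in
/-- The determinant of the square matrix of size `p^{n-1}(p-1) = p^n - p^{n-1}`, with rows and
columns indexed by the integers in `[p^{n-1}, p^n - 1]` and entries the numbers of common
descendants, equals `p^(p^{n-1} - 1)`. -/
theorem det_Xcard_matrix {p : ℕ} (hp : p.Prime) {n : ℕ} (hn : 1 ≤ n) :
    (Matrix.of fun i j : Fin (p ^ n - p ^ (n - 1)) =>
        ((Xcard p (n - 1) (p ^ (n - 1) + (i : ℕ)) (p ^ (n - 1) + (j : ℕ))) : ℤ)).det =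
      (p : ℤ) ^ (p ^ (n - 1) - 1) := by
  have hp0 : 0 < p := hp.pos
  set m := n - 1 with hm
  have hq0 : 0 < p ^ m := pow_pos hp0 m
  have hqp : p ^ m ≤ p ^ m * p := Nat.le_mul_of_pos_right _ hp0
  have hpow : p ^ n = p ^ m * p := by
    rw [hm, ← pow_succ]
    congr 1
    omega
  have hN : p ^ m + (p ^ n - p ^ m) = p ^ m * p := by omega
  set Nn := p ^ n - p ^ m with hNn
  set Hm : Matrix (Fin Nn) (Fin Nn) ℤ :=
    Matrix.of fun i d => ind (((p ^ m + (d : ℕ) : ℕ) : ℤ) ∈ Desc p m (p ^ m + (i : ℕ)))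
    with hHm
  set Lm : Matrix (Fin Nn) (Fin (p ^ m - 1)) ℤ :=
    Matrix.of fun i b => ind (((1 + (b : ℕ) : ℕ) : ℤ) ∈ Desc p m (p ^ m + (i : ℕ)))
    with hLm
  set Km : Matrix (Fin Nn) (Fin (p ^ m - 1)) ℤ :=
    Matrix.of fun d b => chi (p ^ m) (1 + (b : ℕ)) (p ^ m + (d : ℕ))
    with hKm
  -- bounds for row indices
  have hrow : ∀ i : Fin Nn, p ^ m ≤ p ^ m + (i : ℕ) ∧ p ^ m + (i : ℕ) < p ^ m * p := by
    intro i
    have := i.isLt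
    omega
  -- Step 1: the matrix is the Gram matrix L Lᵀ + H Hᵀ
  have hXg : (Matrix.of fun i j : Fin Nn =>
        ((Xcard p m (p ^ m + (i : ℕ)) (p ^ m + (j : ℕ))) : ℤ))
      = Lm * Lm.transpose + Hm * Hm.transpose := by
    ext i j
    show ((Xcard p m (p ^ m + (i : ℕ)) (p ^ m + (j : ℕ)) : ℕ) : ℤ)
      = (∑ b : Fin (p ^ m - 1),
          ind (((1 + (b : ℕ) : ℕ) : ℤ) ∈ Desc p m (p ^ m + (i : ℕ)))
            * ind (((1 + (b : ℕ) : ℕ) : ℤ) ∈ Desc p m (p ^ m + (j : ℕ))))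
        + ∑ d : Fin Nn,
          ind (((p ^ m + (d : ℕ) : ℕ) : ℤ) ∈ Desc p m (p ^ m + (i : ℕ)))
            * ind (((p ^ m + (d : ℕ) : ℕ) : ℤ) ∈ Desc p m (p ^ m + (j : ℕ)))
    rw [Fin.sum_univ_eq_sum_range (fun k =>
        ind (((1 + k : ℕ) : ℤ) ∈ Desc p m (p ^ m + (i : ℕ)))
          * ind (((1 + k : ℕ) : ℤ) ∈ Desc p m (p ^ m + (j : ℕ)))) (p ^ m - 1),
      Fin.sum_univ_eq_sum_range (fun k =>
        ind (((p ^ m + k : ℕ) : ℤ) ∈ Desc p m (p ^ m + (i : ℕ)))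
          * ind (((p ^ m + k : ℕ) : ℤ) ∈ Desc p m (p ^ m + (j : ℕ)))) Nn]
    exact xcard_split hp0 hN (hrow i).1 (hrow i).2
  -- Step 2: L = H K
  have hLHK : Lm = Hm * Km := by
    ext i b
    show ind (((1 + (b : ℕ) : ℕ) : ℤ) ∈ Desc p m (p ^ m + (i : ℕ)))
      = ∑ d : Fin Nn,
          ind (((p ^ m + (d : ℕ) : ℕ) : ℤ) ∈ Desc p m (p ^ m + (i : ℕ)))
            * chi (p ^ m) (1 + (b : ℕ)) (p ^ m + (d : ℕ))
    rw [Fin.sum_univ_eq_sum_range (fun k =>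
        ind (((p ^ m + k : ℕ) : ℤ) ∈ Desc p m (p ^ m + (i : ℕ)))
          * chi (p ^ m) (1 + (b : ℕ)) (p ^ m + k)) Nn]
    have hb2 : 1 + (b : ℕ) < p ^ m := by have := b.isLt; omega
    exact (sum_chi_high hp0 hN (hrow i).1 (hrow i).2 (by omega) hb2).symm
  -- Step 3: Kᵀ K = (p - 1) • 1
  have hKtK : Km.transpose * Km
      = ((p : ℤ) - 1) • (1 : Matrix (Fin (p ^ m - 1)) (Fin (p ^ m - 1)) ℤ) := by
    ext b b'
    show (∑ d : Fin Nn,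
        chi (p ^ m) (1 + (b : ℕ)) (p ^ m + (d : ℕ))
          * chi (p ^ m) (1 + (b' : ℕ)) (p ^ m + (d : ℕ)))
      = ((p : ℤ) - 1) • (1 : Matrix (Fin (p ^ m - 1)) (Fin (p ^ m - 1)) ℤ) b b'
    have hb2 : 1 + (b : ℕ) < p ^ m := by have := b.isLt; omega
    have hb2' : 1 + (b' : ℕ) < p ^ m := by have := b'.isLt; omega
    rw [Fin.sum_univ_eq_sum_range (fun k =>
        chi (p ^ m) (1 + (b : ℕ)) (p ^ m + k)
          * chi (p ^ m) (1 + (b' : ℕ)) (p ^ m + k)) Nn]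
    by_cases hbb : b = b'
    · subst hbb
      have hrhs : ((p : ℤ) - 1) • (1 : Matrix (Fin (p ^ m - 1)) (Fin (p ^ m - 1)) ℤ) b b
          = (p : ℤ) - 1 := by
        simp [Matrix.smul_apply, Matrix.one_apply]
      rw [hrhs]
      have hNq : Nn = p ^ m * (p - 1) := by
        have h : p ^ m * (p - 1) + p ^ m * 1 = p ^ m * p := by
          rw [← Nat.mul_add]
          congr 1
          omega
        omega
      calc ∑ k ∈ range Nn,
            chi (p ^ m) (1 + (b : ℕ)) (p ^ m + k) * chi (p ^ m) (1 + (b : ℕ)) (p ^ m + k)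
          = ∑ k ∈ range (p ^ m * (p - 1)),
            (ind ((p ^ m + k) % (2 * p ^ m) = 2 * p ^ m - (1 + (b : ℕ)))
              + ind ((p ^ m + k) % (2 * p ^ m) = 1 + (b : ℕ))) := by
            rw [hNq]
            exact Finset.sum_congr rfl fun k _ => chi_sq _ hb2
        _ = ((p - 1 : ℕ) : ℤ) := count_sum hq0 (by omega) hb2 (p - 1)
        _ = (p : ℤ) - 1 := by push_cast [Nat.cast_sub hp.one_le]; ring
    · have hrhs : ((p : ℤ) - 1) • (1 : Matrix (Fin (p ^ m - 1)) (Fin (p ^ m - 1)) ℤ) b b'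
          = 0 := by
        simp [Matrix.smul_apply, Matrix.one_apply, hbb]
      rw [hrhs]
      refine Finset.sum_eq_zero fun k _ => ?_
      have hne : 1 + (b : ℕ) ≠ 1 + (b' : ℕ) := by
        intro h
        exact hbb (Fin.val_injective (by omega))
      exact chi_mul_ne _ (by omega) hb2 (by omega) hb2' hne
  -- Step 4: det H = 1
  have hdetH : Hm.det = 1 := by
    have htri : Hm.BlockTriangular OrderDual.toDual := by
      intro i j hij
      have hij' : (i : ℕ) < (j : ℕ) := hij
      show ind (((p ^ m + (j : ℕ) : ℕ) : ℤ) ∈ Desc p m (p ^ m + (i : ℕ))) = 0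
      unfold ind
      rw [if_neg]
      intro hmem
      have := (desc_bound hmem).2
      have hcast : ((p ^ m + (j : ℕ) : ℕ) : ℤ) ≤ ((p ^ m + (i : ℕ) : ℕ) : ℤ) := this
      have : p ^ m + (j : ℕ) ≤ p ^ m + (i : ℕ) := by exact_mod_cast hcast
      omega
    rw [Matrix.det_of_lowerTriangular Hm htri]
    refine Finset.prod_eq_one fun i _ => ?_
    show ind (((p ^ m + (i : ℕ) : ℕ) : ℤ) ∈ Desc p m (p ^ m + (i : ℕ))) = 1
    unfold ind
    rw [if_pos (self_mem_desc p m _)]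
  -- Assemble
  rw [hXg, hLHK]
  have e1 : (Hm * Km) * (Hm * Km).transpose + Hm * Hm.transpose
      = Hm * ((Km * Km.transpose + 1) * Hm.transpose) := by
    rw [Matrix.transpose_mul, Matrix.add_mul, Matrix.one_mul, Matrix.mul_add,
      Matrix.mul_assoc, Matrix.mul_assoc]
  rw [e1, Matrix.det_mul, Matrix.det_mul, hdetH, Matrix.det_transpose, hdetH,
    one_mul, mul_one, Matrix.det_mul_add_one_comm, hKtK]
  have e2 : ((p : ℤ) - 1) • (1 : Matrix (Fin (p ^ m - 1)) (Fin (p ^ m - 1)) ℤ) + 1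
      = (p : ℤ) • (1 : Matrix (Fin (p ^ m - 1)) (Fin (p ^ m - 1)) ℤ) := by
    have h1 : (1 : Matrix (Fin (p ^ m - 1)) (Fin (p ^ m - 1)) ℤ)
        = (1 : ℤ) • (1 : Matrix (Fin (p ^ m - 1)) (Fin (p ^ m - 1)) ℤ) := (one_smul ℤ _).symm
    nth_rewrite 2 [h1]
    rw [← add_smul]
    norm_num
  rw [e2, Matrix.det_smul, Matrix.det_one, Fintype.card_fin, mul_one]
end

section
/- Let p be a prime, n ≥ 1, and let q ∈ ℂ be a primitive 2p^n-th root of unity. Then the quantum integer [p^{n−1}]_q := (q^{p^{n−1}} − q^{−p^{n−1}})/(q − q^{−1}) lies in the ring ℤ[q] and divides p in ℤ[q], i.e., there exists r ∈ ℤ[q] with p = r · [p^{n−1}]_q. -/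
/-- Let `p` be a prime, `n ≥ 1`, and `q ∈ ℂ` a primitive `2p^n`-th root of unity. Then the
quantum integer `[p^{n-1}]_q = (q^{p^{n-1}} - q^{-p^{n-1}})/(q - q⁻¹)` lies in `ℤ[q]` and
divides `p` in `ℤ[q]`. -/
theorem quantum_integer_dvd_p {p : ℕ} (hp : p.Prime) {n : ℕ} (hn : 1 ≤ n) {q : ℂ}
    (hq : IsPrimitiveRoot q (2 * p ^ n)) :
    (q ^ p ^ (n - 1) - q⁻¹ ^ p ^ (n - 1)) / (q - q⁻¹) ∈ Subring.closure ({q} : Set ℂ) ∧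
    ∃ r ∈ Subring.closure ({q} : Set ℂ),
      (p : ℂ) = r * ((q ^ p ^ (n - 1) - q⁻¹ ^ p ^ (n - 1)) / (q - q⁻¹)) := by
  set R := Subring.closure ({q} : Set ℂ) with hR
  set m := p ^ (n - 1) with hmdef
  have hq0 : q ≠ 0 := hq.ne_zero (by have := hp.pos; positivity)
  have hpn2 : 2 ≤ p ^ n := hp.two_le.trans (Nat.le_self_pow (by omega) p)
  -- q² ≠ 1
  have hq2 : q ^ 2 ≠ 1 := by
    intro h
    have := Nat.le_of_dvd (by norm_num) (hq.dvd_of_pow_eq_one 2 h)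
    omega
  have hq2' : q ^ 2 - 1 ≠ 0 := sub_ne_zero.mpr hq2
  have hsplit : q - q⁻¹ = q⁻¹ * (q ^ 2 - 1) := by field_simp
  have hd : q - q⁻¹ ≠ 0 := by
    rw [hsplit]; exact mul_ne_zero (inv_ne_zero hq0) hq2'
  have hm1 : m - 1 + 1 = m := Nat.succ_pred_eq_of_pos (pow_pos hp.pos _)
  set S : ℂ := ∑ j ∈ Finset.range m, (q ^ 2) ^ j with hS
  have hgeo : S * (q ^ 2 - 1) = (q ^ 2) ^ m - 1 := geom_sum_mul _ _
  -- the quantum integer equals q⁻¹^(m-1) * S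
  have e1 : q⁻¹ ^ m * (q ^ 2) ^ m = q ^ m := by
    rw [← mul_pow]; congr 1; field_simp [sq]
  have key : q⁻¹ ^ (m - 1) * S * (q - q⁻¹) = q ^ m - q⁻¹ ^ m := by
    calc q⁻¹ ^ (m - 1) * S * (q - q⁻¹)
        = q⁻¹ ^ (m - 1) * q⁻¹ * (S * (q ^ 2 - 1)) := by rw [hsplit]; ring
      _ = q⁻¹ ^ m * ((q ^ 2) ^ m - 1) := by rw [hgeo, ← pow_succ, hm1]
      _ = q ^ m - q⁻¹ ^ m := by rw [mul_sub, e1, mul_one]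
  have hV : (q ^ m - q⁻¹ ^ m) / (q - q⁻¹) = q⁻¹ ^ (m - 1) * S := by
    rw [div_eq_iff hd, ← key]
  -- q⁻¹ ∈ R
  have hqR : q ∈ R := Subring.subset_closure rfl
  have hinv : q⁻¹ = q ^ (2 * p ^ n - 1) := by
    refine inv_eq_of_mul_eq_one_right ?_
    rw [← pow_succ', Nat.sub_add_cancel (by omega : 1 ≤ 2 * p ^ n), hq.pow_eq_one]
  have hinvR : q⁻¹ ∈ R := hinv ▸ R.pow_mem hqR _
  have hSR : S ∈ R := R.sum_mem fun j _ => R.pow_mem (R.pow_mem hqR 2) j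
  have hVR : (q ^ m - q⁻¹ ^ m) / (q - q⁻¹) ∈ R := by
    rw [hV]; exact R.mul_mem (R.pow_mem hinvR _) hSR
  refine ⟨hVR, ?_⟩
  -- ω := q^(2m) is a primitive p-th root of unity
  set ω : ℂ := q ^ (2 * m) with hω
  have hωprim : IsPrimitiveRoot ω p := by
    refine hq.pow (by positivity) ?_
    rw [hmdef, mul_assoc, ← pow_succ, Nat.sub_add_cancel hn]
  obtain ⟨s, hs⟩ : ∃ s, p = s + 1 + 1 := ⟨p - 2, by have := hp.two_le; omega⟩
  have hprod : ∏ k ∈ Finset.range (s + 1), (1 - ω ^ (k + 1)) = (p : ℂ) := by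
    have := (hs ▸ hωprim : IsPrimitiveRoot ω (s + 1 + 1)).prod_one_sub_pow_eq_order
    rw [this, hs]; push_cast; ring
  set C : ℂ := ∏ k ∈ Finset.range s, (1 - ω ^ (k + 1 + 1)) with hC
  have hsplitprod : (p : ℂ) = C * (1 - ω) := by
    rw [← hprod, Finset.prod_range_succ']; simp; exact Or.inl rfl
  have hCR : C ∈ R := R.prod_mem fun k _ => R.sub_mem R.one_mem
    (R.pow_mem (R.pow_mem hqR _) _)
  refine ⟨-(q ^ (m - 1) * (q ^ 2 - 1)) * C, R.mul_mem (R.neg_mem (R.mul_mem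
    (R.pow_mem hqR _) (R.sub_mem (R.pow_mem hqR 2) R.one_mem))) hCR, ?_⟩
  have e2 : q ^ (m - 1) * q⁻¹ ^ (m - 1) = 1 := by
    rw [← mul_pow, mul_inv_cancel₀ hq0, one_pow]
  have hgeo' : S * (q ^ 2 - 1) = ω - 1 := by rw [hgeo, hω, ← pow_mul, mul_comm 2 m]
  calc (p : ℂ) = C * (1 - ω) := hsplitprod
    _ = -(C * ((q ^ (m - 1) * q⁻¹ ^ (m - 1)) * (S * (q ^ 2 - 1)))) := by
        rw [e2, one_mul, hgeo']; ring
    _ = -(q ^ (m - 1) * (q ^ 2 - 1)) * C * (q⁻¹ ^ (m - 1) * S) := by ring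
    _ = -(q ^ (m - 1) * (q ^ 2 - 1)) * C * ((q ^ m - q⁻¹ ^ m) / (q - q⁻¹)) := by rw [hV]
end
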